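/- Let N ≥ 1 and let τ_{j,N} = -cos(jπ/N) for j = 0, 1, ..., N be the Chebyshev points of the second kind. Set ρ_0 = ρ_N = 2 and ρ_j = 1 for 1 ≤ j ≤ N-1. Then for every real polynomial p of degree at most 2N-1, ∫_{-1}^{1} p(x)/√(1-x²) dx = Σ_{j=0}^{N} (π/(ρ_j N)) · p(τ_{j,N}). -/

import Mathlib

open Polynomial Real

namespace Stmt8Aux

open Polynomial.Chebyshev MeasureTheory Finset

lemma cos_image_Ioo : Real.cos '' Set.Ioo 0 π = Set.Ioo (-1 : ℝ) 1 := by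
  apply Set.Subset.antisymm
  · rintro y ⟨θ, hθ, rfl⟩
    obtain ⟨h0, h1⟩ := hθ
    have hmem : θ ∈ Set.Icc 0 π := ⟨h0.le, h1.le⟩
    constructor
    · rcases lt_or_eq_of_le (Real.neg_one_le_cos θ) with h | h
      · exact h
      · exfalso
        have : θ = π := Real.injOn_cos hmem ⟨Real.pi_pos.le, le_rfl⟩ (by rw [← h, Real.cos_pi])
        exact h1.ne this
    · rcases lt_or_eq_of_le (Real.cos_le_one θ) with h | h
      · exact h
      · exfalso
        have : θ = 0 := Real.injOn_cos hmem ⟨le_rfl, Real.pi_pos.le⟩ (by rw [h, Real.cos_zero])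
        exact h0.ne' this
  · intro y hy
    refine ⟨Real.arccos y, ⟨Real.arccos_pos.2 hy.2, ?_⟩, Real.cos_arccos hy.1.le hy.2.le⟩
    rcases (Real.arccos_le_pi y).lt_or_eq with h | h
    · exact h
    · exfalso
      have := Real.cos_arccos hy.1.le hy.2.le
      rw [h, Real.cos_pi] at this; linarith [hy.1]

lemma lemA (p : Polynomial ℝ) :
    ∫ x in (-1 : ℝ)..1, p.eval x / Real.sqrt (1 - x ^ 2) =
      ∫ θ in (0:ℝ)..π, p.eval (Real.cos θ) := by
  have h1 : ∫ x in (-1 : ℝ)..1, p.eval x / Real.sqrt (1 - x ^ 2)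
      = ∫ x in Set.Ioo (-1:ℝ) 1, p.eval x / Real.sqrt (1 - x ^ 2) := by
    rw [intervalIntegral.integral_of_le (by norm_num), MeasureTheory.integral_Ioc_eq_integral_Ioo]
  have h2 : ∫ θ in (0:ℝ)..π, p.eval (Real.cos θ)
      = ∫ θ in Set.Ioo (0:ℝ) π, p.eval (Real.cos θ) := by
    rw [intervalIntegral.integral_of_le Real.pi_pos.le, MeasureTheory.integral_Ioc_eq_integral_Ioo]
  rw [h1, h2, ← cos_image_Ioo]
  rw [MeasureTheory.integral_image_eq_integral_abs_deriv_smul measurableSet_Ioo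
    (fun x _ => (Real.hasDerivAt_cos x).hasDerivWithinAt)
    (Real.injOn_cos.mono (Set.Ioo_subset_Icc_self)) _]
  apply MeasureTheory.setIntegral_congr_fun measurableSet_Ioo
  intro θ hθ
  have hs : Real.sin θ > 0 := Real.sin_pos_of_pos_of_lt_pi hθ.1 hθ.2
  have hsq : Real.sqrt (1 - Real.cos θ ^ 2) = Real.sin θ := by
    rw [show (1 : ℝ) - Real.cos θ ^ 2 = Real.sin θ ^ 2 by
      have := Real.sin_sq_add_cos_sq θ; linarith]
    exact Real.sqrt_sq hs.le
  simp only [smul_eq_mul, abs_neg, abs_of_pos hs, hsq]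
  field_simp

lemma cos_sum (N k : ℕ) (hN : 1 ≤ N) (hk1 : 1 ≤ k) (hk2 : k ≤ 2*N-1) :
    ∑ j ∈ Finset.range (N+1), Real.cos ((k:ℝ) * j * π / N) = (1 + Real.cos (k*π))/2 := by
  have hNR : (N:ℝ) ≠ 0 := Nat.cast_ne_zero.2 (by omega)
  set e : ℝ := k*π/(2*N) with he
  have harg : ∀ j : ℕ, (k:ℝ) * j * π / N = 2*j*e := by
    intro j; rw [he]; field_simp
  have hkpi : (k:ℝ) * π = 2*N*e := by rw [he]; field_simp
  have hsin : 0 < Real.sin e := by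
    apply Real.sin_pos_of_pos_of_lt_pi
    · apply div_pos (by positivity) (by positivity)
    · rw [he, div_lt_iff₀ (by positivity)]
      have : (k:ℝ) < 2*N := by exact_mod_cast (by omega : k < 2*N)
      nlinarith [Real.pi_pos]
  have key : 2 * Real.sin e * ∑ j ∈ Finset.range (N+1), Real.cos ((k:ℝ) * j * π / N)
      = 2 * Real.sin e * ((1 + Real.cos (k*π))/2) := by
    rw [Finset.mul_sum]
    have step : ∀ j ∈ Finset.range (N+1), 2 * Real.sin e * Real.cos ((k:ℝ) * j * π / N)
        = Real.sin (2*(j+1)*e - e) - Real.sin (2*j*e - e) := by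
      intro j _
      rw [harg j]
      have h1 : Real.sin (2*(j:ℝ)*e + e)
          = Real.sin (2*j*e) * Real.cos e + Real.cos (2*j*e) * Real.sin e := Real.sin_add _ _
      have h2 : Real.sin (2*(j:ℝ)*e - e)
          = Real.sin (2*j*e) * Real.cos e - Real.cos (2*j*e) * Real.sin e := Real.sin_sub _ _
      have h3 : 2*((j:ℝ)+1)*e - e = 2*(j:ℝ)*e + e := by push_cast; ring
      rw [h3, h1, h2]; ring
    rw [Finset.sum_congr rfl step]
    have tel := Finset.sum_range_sub (fun j : ℕ => Real.sin (2*(j:ℝ)*e - e)) (N+1)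
    rw [show (∑ j ∈ Finset.range (N+1),
        (Real.sin (2*((j:ℝ)+1)*e - e) - Real.sin (2*(j:ℝ)*e - e)))
      = ∑ j ∈ Finset.range (N+1), ((fun j : ℕ => Real.sin (2*(j:ℝ)*e - e)) (j+1)
          - (fun j : ℕ => Real.sin (2*(j:ℝ)*e - e)) j) by
        apply Finset.sum_congr rfl; intro j _; push_cast; try ring_nf, tel]
    have h0e : Real.sin (2*(0:ℝ)*e - e) = -Real.sin e := by
      rw [show 2*(0:ℝ)*e - e = -e by ring, Real.sin_neg]
    have hsN : Real.sin (2*(N:ℝ)*e) = 0 := by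
      rw [show 2*(N:ℝ)*e = (k:ℝ)*π by rw [hkpi]]
      exact Real.sin_nat_mul_pi k
    push_cast
    rw [h0e, show 2*((N:ℝ)+1)*e - e = 2*(N:ℝ)*e + e by ring, Real.sin_add, hsN, hkpi]
    rw [show (2:ℝ)*N*e = 2*(N:ℝ)*e by ring]
    ring
  exact mul_left_cancel₀ (by positivity) key

lemma two_poly : (2 : Polynomial ℝ) = C 2 := by
  rw [show (2:ℝ) = ((2:ℕ):ℝ) by norm_num, Polynomial.C_eq_natCast]; norm_num

lemma T_deg_coeff : ∀ n : ℕ, (T ℝ n).natDegree ≤ n ∧ (T ℝ n).coeff n = 2^(n-1) := by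
  intro n
  induction n using Nat.strong_induction_on with
  | _ n ih =>
    match n with
    | 0 => simp [T_zero]
    | 1 => simp [T_one]
    | (m+2) =>
      have h2 : ((m:ℤ)+2) = ((m+2:ℕ):ℤ) := by push_cast; ring
      have hT : T ℝ ((m+2:ℕ):ℤ) = 2 * X * T ℝ ((m+1:ℕ):ℤ) - T ℝ (m:ℤ) := by
        rw [← h2, T_add_two]; norm_num
      obtain ⟨d1, c1⟩ := ih (m+1) (by omega)
      obtain ⟨d0, c0⟩ := ih m (by omega)
      have hmul : (2 * X * T ℝ ((m+1:ℕ):ℤ)) = C 2 * (X * T ℝ ((m+1:ℕ):ℤ)) := by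
        rw [← mul_assoc, two_poly]
      constructor
      · rw [hT]
        apply le_trans (natDegree_sub_le _ _)
        apply max_le
        · rw [hmul]
          apply le_trans (natDegree_C_mul_le _ _)
          apply le_trans (natDegree_mul_le)
          have : (X : Polynomial ℝ).natDegree = 1 := natDegree_X
          omega
        · omega
      · rw [hT, coeff_sub, hmul, coeff_C_mul, coeff_X_mul]
        have : (T ℝ (m:ℤ)).coeff (m+2) = 0 := by
          apply coeff_eq_zero_of_natDegree_lt; omega
        rw [this, c1]
        simp
        ring

lemma weight_sum (N : ℕ) (hN : 1 ≤ N) (g : ℕ → ℝ) :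
    ∑ j ∈ Finset.range (N+1), (π / ((if j = 0 ∨ j = N then (2:ℝ) else 1) * N)) * g j
      = (π/N) * ((∑ j ∈ Finset.range (N+1), g j) - g 0 / 2 - g N / 2) := by
  have hNR : (N:ℝ) ≠ 0 := Nat.cast_ne_zero.2 (by omega)
  have hsplit : ∀ h : ℕ → ℝ, ∑ j ∈ Finset.range (N+1), h j
      = h 0 + (∑ j ∈ Finset.Ico 1 N, h j) + h N := by
    intro h
    rw [Finset.range_eq_Ico, show N + 1 = (N+1) from rfl]
    rw [Finset.sum_Ico_succ_top (by omega), Finset.sum_eq_sum_Ico_succ_bot (by omega)]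
  rw [hsplit, hsplit g]
  have hmid : ∀ j ∈ Finset.Ico 1 N,
      (π / ((if j = 0 ∨ j = N then (2:ℝ) else 1) * N)) * g j = (π/N) * g j := by
    intro j hj
    simp only [Finset.mem_Ico] at hj
    rw [if_neg (by omega)]
    ring
  rw [Finset.sum_congr rfl hmid, ← Finset.mul_sum]
  simp only [if_pos (Or.inl rfl), if_pos (Or.inr rfl), true_or, or_true, ↓reduceIte]
  field_simp
  ring

lemma good_T (N k : ℕ) (hN : 1 ≤ N) (hk : k ≤ 2*N-1) :
    (∫ θ in (0:ℝ)..π, (T ℝ (k:ℤ)).eval (Real.cos θ)) =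
      ∑ j ∈ Finset.range (N+1),
        (π / ((if j = 0 ∨ j = N then (2:ℝ) else 1) * N)) * (T ℝ (k:ℤ)).eval (-Real.cos ((j:ℝ)*π/N)) := by
  have hNR : (N:ℝ) ≠ 0 := Nat.cast_ne_zero.2 (by omega)
  have hT : ∀ θ : ℝ, (T ℝ (k:ℤ)).eval (Real.cos θ) = Real.cos ((k:ℝ)*θ) := by
    intro θ
    rw [T_real_cos]
    push_cast
    ring_nf
  have hg : ∀ j : ℕ, (T ℝ (k:ℤ)).eval (-Real.cos ((j:ℝ)*π/N))
      = Real.cos ((k:ℝ)*π) * Real.cos ((k:ℝ)*j*π/N) := by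
    intro j
    rw [← Real.cos_pi_sub, hT]
    rw [show (k:ℝ) * (π - (j:ℝ)*π/N) = (k:ℝ)*π - (k:ℝ)*j*π/N by ring, Real.cos_sub,
      Real.sin_nat_mul_pi]
    ring
  have hL : (∫ θ in (0:ℝ)..π, (T ℝ (k:ℤ)).eval (Real.cos θ))
      = ∫ θ in (0:ℝ)..π, Real.cos ((k:ℝ)*θ) := by
    apply intervalIntegral.integral_congr
    intro θ _
    exact hT θ
  rw [hL]
  simp only [hg]
  rw [weight_sum N hN]
  rcases Nat.eq_zero_or_pos k with hk0 | hk1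
  · subst hk0
    simp only [Nat.cast_zero, zero_mul, Real.cos_zero, one_mul]
    rw [intervalIntegral.integral_const, Finset.sum_const, Finset.card_range]
    rw [show (0:ℝ)/(N:ℝ) = 0 by ring, Real.cos_zero]
    simp only [smul_eq_mul, nsmul_eq_mul, mul_one]
    push_cast
    field_simp
    try ring
    try tauto
  · have hk0R : (k:ℝ) ≠ 0 := Nat.cast_ne_zero.2 (by omega)
    have hint : ∫ θ in (0:ℝ)..π, Real.cos ((k:ℝ)*θ) = 0 := by
      rw [intervalIntegral.integral_comp_mul_left (fun x => Real.cos x) hk0R]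
      simp [Real.sin_nat_mul_pi]
    rw [hint]
    rw [show (∑ j ∈ Finset.range (N+1), Real.cos ((k:ℝ)*π) * Real.cos ((k:ℝ)*j*π/N))
        = Real.cos ((k:ℝ)*π) * ∑ j ∈ Finset.range (N+1), Real.cos ((k:ℝ)*j*π/N) by
      rw [Finset.mul_sum]]
    rw [cos_sum N k hN hk1 hk]
    have e0 : (k:ℝ)*(0:ℕ)*π/N = 0 := by push_cast; ring
    have eN : (k:ℝ)*(N:ℕ)*π/N = (k:ℝ)*π := by field_simp
    rw [e0, eN, Real.cos_zero]
    ring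

lemma main_ind (N : ℕ) (hN : 1 ≤ N) :
    ∀ d : ℕ, d ≤ 2*N-1 → ∀ p : Polynomial ℝ, p.natDegree ≤ d →
    (∫ θ in (0:ℝ)..π, p.eval (Real.cos θ)) =
      ∑ j ∈ Finset.range (N+1),
        (π / ((if j = 0 ∨ j = N then (2:ℝ) else 1) * N)) * p.eval (-Real.cos ((j:ℝ)*π/N)) := by
  intro d
  induction d with
  | zero =>
    intro _ p hp
    have hNR : (N:ℝ) ≠ 0 := Nat.cast_ne_zero.2 (by omega)
    rw [Polynomial.eq_C_of_natDegree_le_zero hp]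
    simp only [eval_C]
    rw [intervalIntegral.integral_const, weight_sum N hN]
    rw [Finset.sum_const, Finset.card_range]
    simp only [smul_eq_mul, nsmul_eq_mul]
    field_simp
    push_cast
    ring
  | succ d ih =>
    intro hd p hp
    set c := p.coeff (d+1) with hc
    set q := p - C (c / 2^d) * T ℝ ((d+1 : ℕ):ℤ) with hq
    obtain ⟨hTd, hTc⟩ := T_deg_coeff (d+1)
    have hTc' : (T ℝ ((d+1:ℕ):ℤ)).coeff (d+1) = 2^d := by
      rw [hTc]; norm_num
    have hqd : q.natDegree ≤ d := by
      rw [natDegree_le_iff_coeff_eq_zero]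
      intro m hm
      rw [hq, coeff_sub, coeff_C_mul]
      rcases eq_or_lt_of_le (Nat.succ_le_of_lt hm) with h | h
      · rw [← h, hTc', ← hc]
        field_simp
        ring
      · have h1 : p.coeff m = 0 := coeff_eq_zero_of_natDegree_lt (by omega)
        have h2 : (T ℝ ((d+1:ℕ):ℤ)).coeff m = 0 := coeff_eq_zero_of_natDegree_lt (by omega)
        rw [h1, h2]; ring
    have hgq := ih (by omega) q hqd
    have hgT := good_T N (d+1) hN hd
    have hp' : p = q + C (c / 2^d) * T ℝ ((d+1:ℕ):ℤ) := by rw [hq]; ring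
    rw [hp']
    simp only [eval_add, eval_mul, eval_C]
    have hcq : Continuous fun θ : ℝ => q.eval (Real.cos θ) :=
      (Polynomial.continuous q).comp Real.continuous_cos
    have hcT : Continuous fun θ : ℝ => c / 2^d * (T ℝ ((d+1:ℕ):ℤ)).eval (Real.cos θ) :=
      continuous_const.mul ((Polynomial.continuous _).comp Real.continuous_cos)
    rw [intervalIntegral.integral_add (hcq.intervalIntegrable _ _) (hcT.intervalIntegrable _ _),
      intervalIntegral.integral_const_mul]
    have hrhs : ∀ j ∈ Finset.range (N+1),
        (π / ((if j = 0 ∨ j = N then (2:ℝ) else 1) * N)) *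
          (q.eval (-Real.cos ((j:ℝ)*π/N)) + c / 2^d * (T ℝ ((d+1:ℕ):ℤ)).eval (-Real.cos ((j:ℝ)*π/N)))
        = (π / ((if j = 0 ∨ j = N then (2:ℝ) else 1) * N)) * q.eval (-Real.cos ((j:ℝ)*π/N))
          + c / 2^d * ((π / ((if j = 0 ∨ j = N then (2:ℝ) else 1) * N)) *
              (T ℝ ((d+1:ℕ):ℤ)).eval (-Real.cos ((j:ℝ)*π/N))) := by
      intro j _; ring
    rw [Finset.sum_congr rfl hrhs, Finset.sum_add_distrib, ← Finset.mul_sum, ← hgq, ← hgT]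

end Stmt8Aux

/-- Gauss–Chebyshev–Lobatto quadrature at the Chebyshev points of the
second kind is exact for polynomials of degree at most `2N-1`. -/
theorem stmt_8 (N : ℕ) (hN : 1 ≤ N) (p : Polynomial ℝ) (hp : p.natDegree ≤ 2 * N - 1)
    (ρ : Fin (N + 1) → ℝ)
    (hρ0 : ρ 0 = 2) (hρN : ρ (Fin.last N) = 2)
    (hρ : ∀ j : Fin (N + 1), 1 ≤ (j : ℕ) → (j : ℕ) ≤ N - 1 → ρ j = 1) :
    ∫ x in (-1 : ℝ)..1, p.eval x / Real.sqrt (1 - x ^ 2) =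
      ∑ j : Fin (N + 1),
        (π / (ρ j * N)) * p.eval (-Real.cos ((j : ℝ) * π / (N : ℝ))) := by
  have hρ' : ∀ j : Fin (N+1), ρ j = if (j:ℕ) = 0 ∨ (j:ℕ) = N then (2:ℝ) else 1 := by
    intro j
    by_cases h0 : (j:ℕ) = 0
    · rw [if_pos (Or.inl h0)]
      have : j = 0 := Fin.ext (by simpa using h0)
      rw [this, hρ0]
    · by_cases hn : (j:ℕ) = N
      · rw [if_pos (Or.inr hn)]
        have : j = Fin.last N := Fin.ext (by simpa using hn)
        rw [this, hρN]
      · rw [if_neg (by tauto)]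
        have hlt : (j:ℕ) < N + 1 := j.isLt
        exact hρ j (by omega) (by omega)
  simp only [hρ']
  rw [Stmt8Aux.lemA p]
  rw [Fin.sum_univ_eq_sum_range
    (fun j : ℕ => (π / ((if j = 0 ∨ j = N then (2:ℝ) else 1) * N)) *
      p.eval (-Real.cos ((j:ℝ) * π / (N : ℝ)))) (N+1)]
  have := Stmt8Aux.main_ind N hN (2*N-1) le_rfl p hp
  convert this using 3 with j
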